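/- arXiv:1806.03781 — 3 statements merged into one kernel-verified Lean document; each statement's English description precedes it below -/
import Mathlib

section
/- Consider the noisy Hegselmann–Krause update x_i(t+1) = clamp to [0,1] of (x̃_i(t) + I_{i∈S} ξ_i(t+1)), where the noises satisfy |ξ_i(t)| ≤ δ almost surely with 2δ ≤ ε. If at some time T the diameter satisfies d_V(T) ≤ ε, then almost surely d_V(t) ≤ 2δ ≤ ε for all t > T. -/
open scoped Classical

/-- Clamp a real number into `[0,1]`. -/
noncomputable def clamp (y : ℝ) : ℝ := max 0 (min 1 y)

/-- The Hegselmann–Krause local average of agent `i`. -/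
noncomputable def hkAvg {n : ℕ} (ε : ℝ) (x : Fin n → ℝ) (i : Fin n) : ℝ :=
  (∑ j ∈ Finset.univ.filter fun j => |x j - x i| ≤ ε, x j) /
    ((Finset.univ.filter fun j => |x j - x i| ≤ ε).card : ℝ)

lemma clamp_lipschitz (u v : ℝ) : |clamp u - clamp v| ≤ |u - v| := by
  unfold clamp
  have h1 : |max 0 (min 1 u) - max 0 (min 1 v)| ≤ |min 1 u - min 1 v| := by
    rw [max_comm 0 (min 1 u), max_comm 0 (min 1 v)]
    exact abs_max_sub_max_le_abs _ _ _
  have h2 : |min 1 u - min 1 v| ≤ |u - v| := (abs_min_sub_min_le_max 1 u 1 v).trans (by simp)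
  exact h1.trans h2

lemma hk_step {n : ℕ} (hn : 0 < n) (ε δ : ℝ) (hδ : 0 < δ) (hδε : 2 * δ ≤ ε)
    (S : Finset (Fin n)) (x : ℕ → Fin n → ℝ) (ξ : ℕ → Fin n → ℝ)
    (hξ : ∀ t i, |ξ t i| ≤ δ)
    (hupd : ∀ t i, x (t + 1) i = clamp (hkAvg ε (x t) i + if i ∈ S then ξ (t + 1) i else 0))
    (t : ℕ) (ht : ∀ i j, |x t i - x t j| ≤ ε) :
    ∀ i j, |x (t + 1) i - x (t + 1) j| ≤ 2 * δ := by
  have havg : ∀ i : Fin n, hkAvg ε (x t) i = (∑ j, x t j) / n := by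
    intro i
    unfold hkAvg
    have hfilt : (Finset.univ.filter fun j => |x t j - x t i| ≤ ε) = Finset.univ := by
      ext j; simp [ht j i]
    rw [hfilt]; simp
  intro i j
  rw [hupd t i, hupd t j, havg i, havg j]
  have hb : ∀ k : Fin n, |(if k ∈ S then ξ (t + 1) k else 0)| ≤ δ := by
    intro k; split
    · exact hξ _ _
    · simpa using hδ.le
  calc |clamp ((∑ k, x t k) / n + _) - clamp ((∑ k, x t k) / n + _)|
      ≤ |((∑ k, x t k) / n + (if i ∈ S then ξ (t + 1) i else 0)) -
          ((∑ k, x t k) / n + (if j ∈ S then ξ (t + 1) j else 0))| := clamp_lipschitz _ _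
    _ = |(if i ∈ S then ξ (t + 1) i else 0) - (if j ∈ S then ξ (t + 1) j else 0)| := by
          ring_nf
    _ ≤ |(if i ∈ S then ξ (t + 1) i else 0)| + |(if j ∈ S then ξ (t + 1) j else 0)| :=
          abs_sub _ _
    _ ≤ δ + δ := add_le_add (hb i) (hb j)
    _ = 2 * δ := by ring

/-- In the noisy HK model with noises bounded by `δ ≤ ε/2`, once the diameter is at most
`ε` at some time `T`, the diameter stays at most `2δ` for all later times. -/
theorem hk_diam_le_two_delta_forever (n : ℕ) (hn : 0 < n) (ε δ : ℝ)
    (hδ : 0 < δ) (hδε : 2 * δ ≤ ε)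
    (S : Finset (Fin n)) (x : ℕ → Fin n → ℝ) (ξ : ℕ → Fin n → ℝ)
    (hξ : ∀ t i, |ξ t i| ≤ δ)
    (hx0 : ∀ i, x 0 i ∈ Set.Icc (0:ℝ) 1)
    (hupd : ∀ t i, x (t + 1) i = clamp (hkAvg ε (x t) i + if i ∈ S then ξ (t + 1) i else 0))
    (T : ℕ) (hT : ∀ i j, |x T i - x T j| ≤ ε) :
    ∀ t, T < t → ∀ i j, |x t i - x t j| ≤ 2 * δ := by
  intro t ht
  induction t with
  | zero => omega
  | succ s ih =>
    rcases Nat.lt_succ_iff_lt_or_eq.mp ht with h | h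
    · exact hk_step hn ε δ hδ hδε S x ξ hξ hupd s
        (fun i j => (ih h i j).trans hδε)
    · subst h
      exact hk_step hn ε δ hδ hδε S x ξ hξ hupd T hT
end

section
/- In the noise-free Hegselmann–Krause model (S = ∅), for every initial condition x(0) ∈ [0,1]^n there exist a finite time T₀ and limit values x_i* ∈ [0,1] such that x_i(t) = x_i* for all t ≥ T₀ and all i, and moreover for any pair i, j either x_i* = x_j* or |x_i* − x_j*| > ε. -/
open scoped Classical

open Filter Finset

section avg
variable {ι : Type*} [DecidableEq ι]

lemma avg_le {S : Finset ι} (hS : S.Nonempty) {f : ι → ℝ} {b : ℝ}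
    (h : ∀ j ∈ S, f j ≤ b) : (∑ j ∈ S, f j) / S.card ≤ b := by
  have hc : 0 < (S.card : ℝ) := by exact_mod_cast Finset.card_pos.mpr hS
  rw [div_le_iff₀ hc]
  calc (∑ j ∈ S, f j) ≤ ∑ _j ∈ S, b := Finset.sum_le_sum h
    _ = b * S.card := by rw [Finset.sum_const, nsmul_eq_mul, mul_comm]

lemma le_avg {S : Finset ι} (hS : S.Nonempty) {f : ι → ℝ} {a : ℝ}
    (h : ∀ j ∈ S, a ≤ f j) : a ≤ (∑ j ∈ S, f j) / S.card := by
  have hc : 0 < (S.card : ℝ) := by exact_mod_cast Finset.card_pos.mpr hS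
  rw [le_div_iff₀ hc]
  calc a * S.card = ∑ _j ∈ S, a := by rw [Finset.sum_const, nsmul_eq_mul, mul_comm]
    _ ≤ ∑ j ∈ S, f j := Finset.sum_le_sum h

lemma sum_mul_card_le {S T : Finset ι} {f : ι → ℝ}
    (h : ∀ a ∈ S, ∀ b ∈ T, f a ≤ f b) :
    (∑ a ∈ S, f a) * T.card ≤ (∑ b ∈ T, f b) * S.card := by
  calc (∑ a ∈ S, f a) * T.card = ∑ a ∈ S, ∑ _b ∈ T, f a := by
        simp [Finset.sum_const, nsmul_eq_mul, Finset.sum_mul, mul_comm]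
    _ ≤ ∑ a ∈ S, ∑ b ∈ T, f b := by
        refine Finset.sum_le_sum fun a ha => Finset.sum_le_sum fun b hb => h a ha b hb
    _ = (∑ b ∈ T, f b) * S.card := by
        rw [Finset.sum_const]; simp [nsmul_eq_mul, mul_comm]

lemma avg_le_avg {S T : Finset ι} (hS : S.Nonempty) (hT : T.Nonempty) {f : ι → ℝ}
    (h : ∀ a ∈ S, ∀ b ∈ T, f a ≤ f b) :
    (∑ a ∈ S, f a) / S.card ≤ (∑ b ∈ T, f b) / T.card := by
  have hcS : 0 < (S.card : ℝ) := by exact_mod_cast Finset.card_pos.mpr hS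
  have hcT : 0 < (T.card : ℝ) := by exact_mod_cast Finset.card_pos.mpr hT
  rw [div_le_div_iff₀ hcS hcT]
  exact sum_mul_card_le h

lemma avg_union_le {S T : Finset ι} (hT : T.Nonempty) (hd : Disjoint S T) {f : ι → ℝ}
    (h : ∀ a ∈ S, ∀ b ∈ T, f a ≤ f b) :
    (∑ a ∈ S ∪ T, f a) / (S ∪ T).card ≤ (∑ b ∈ T, f b) / T.card := by
  have hcT : 0 < (T.card : ℝ) := by exact_mod_cast Finset.card_pos.mpr hT
  have hcU : 0 < ((S ∪ T).card : ℝ) := by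
    exact_mod_cast Finset.card_pos.mpr (hT.mono Finset.subset_union_right)
  rw [div_le_div_iff₀ hcU hcT, Finset.sum_union hd, Finset.card_union_of_disjoint hd]
  have := sum_mul_card_le h
  push_cast
  nlinarith [this]

lemma le_avg_union {S T : Finset ι} (hS : S.Nonempty) (hd : Disjoint S T) {f : ι → ℝ}
    (h : ∀ a ∈ S, ∀ b ∈ T, f a ≤ f b) :
    (∑ a ∈ S, f a) / S.card ≤ (∑ b ∈ S ∪ T, f b) / (S ∪ T).card := by
  have hcS : 0 < (S.card : ℝ) := by exact_mod_cast Finset.card_pos.mpr hS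
  have hcU : 0 < ((S ∪ T).card : ℝ) := by
    exact_mod_cast Finset.card_pos.mpr (hS.mono Finset.subset_union_left)
  rw [div_le_div_iff₀ hcS hcU, Finset.sum_union hd, Finset.card_union_of_disjoint hd]
  have := sum_mul_card_le h
  push_cast
  nlinarith [this]

end avg


noncomputable def nbhd {n : ℕ} (ε : ℝ) (x : Fin n → ℝ) (i : Fin n) : Finset (Fin n) :=
  Finset.univ.filter fun j => |x j - x i| ≤ ε

section nb
variable {n : ℕ} {ε : ℝ}

lemma mem_nbhd {x : Fin n → ℝ} {i j : Fin n} : j ∈ nbhd ε x i ↔ |x j - x i| ≤ ε := by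
  simp [nbhd]

lemma self_mem_nbhd (hε : 0 < ε) (x : Fin n → ℝ) (i : Fin n) : i ∈ nbhd ε x i := by
  simp [nbhd, hε.le]

lemma nbhd_nonempty (hε : 0 < ε) (x : Fin n → ℝ) (i : Fin n) : (nbhd ε x i).Nonempty :=
  ⟨i, self_mem_nbhd hε x i⟩

lemma hkAvg_eq (x : Fin n → ℝ) (i : Fin n) :
    hkAvg ε x i = (∑ j ∈ nbhd ε x i, x j) / ((nbhd ε x i).card : ℝ) := rfl

/-- Order preservation of the HK update. -/
lemma hkAvg_mono (hε : 0 < ε) (x : Fin n → ℝ) {i j : Fin n} (hij : x i ≤ x j) :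
    hkAvg ε x i ≤ hkAvg ε x j := by
  set A := nbhd ε x i with hA
  set B := nbhd ε x j with hB
  have hAne : A.Nonempty := nbhd_nonempty hε x i
  have hBne : B.Nonempty := nbhd_nonempty hε x j
  have key1 : ∀ a ∈ A \ B, ∀ b ∈ B, x a ≤ x b := by
    intro a ha b hb
    rw [Finset.mem_sdiff] at ha
    have h1 : |x a - x i| ≤ ε := mem_nbhd.mp ha.1
    have h2 : ¬ |x a - x j| ≤ ε := fun h => ha.2 (mem_nbhd.mpr h)
    have h3 : |x b - x j| ≤ ε := mem_nbhd.mp hb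
    rw [abs_le] at h1 h3
    rw [not_le, lt_abs] at h2
    rcases h2 with h2 | h2 <;> linarith
  have key2 : ∀ a ∈ A, ∀ b ∈ B \ A, x a ≤ x b := by
    intro a ha b hb
    rw [Finset.mem_sdiff] at hb
    have h1 : |x b - x j| ≤ ε := mem_nbhd.mp hb.1
    have h2 : ¬ |x b - x i| ≤ ε := fun h => hb.2 (mem_nbhd.mpr h)
    have h3 : |x a - x i| ≤ ε := mem_nbhd.mp ha
    rw [abs_le] at h1 h3
    rw [not_le, lt_abs] at h2
    rcases h2 with h2 | h2 <;> linarith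
  rw [hkAvg_eq, hkAvg_eq, ← hA, ← hB]
  by_cases hC : (A ∩ B).Nonempty
  · have e1 : (∑ a ∈ A, x a) / (A.card : ℝ) ≤ (∑ a ∈ A ∩ B, x a) / ((A ∩ B).card : ℝ) := by
      have := avg_union_le (S := A \ B) (T := A ∩ B) hC (Finset.disjoint_sdiff_inter A B)
        (f := x) (fun a ha b hb => key1 a ha b (Finset.mem_inter.mp hb).2)
      have hu : A \ B ∪ A ∩ B = A := Finset.sdiff_union_inter A B
      rwa [hu] at this
    have e2 : (∑ a ∈ A ∩ B, x a) / ((A ∩ B).card : ℝ) ≤ (∑ b ∈ B, x b) / (B.card : ℝ) := by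
      have hd : Disjoint (A ∩ B) (B \ A) := by
        exact Finset.disjoint_of_subset_left Finset.inter_subset_left Finset.disjoint_sdiff
      have := le_avg_union (S := A ∩ B) (T := B \ A) hC hd (f := x)
        (fun a ha b hb => key2 a (Finset.mem_inter.mp ha).1 b hb)
      have hu : A ∩ B ∪ B \ A = B := by
        rw [Finset.union_comm, Finset.inter_comm]
        exact Finset.sdiff_union_inter B A
      rwa [hu] at this
    exact e1.trans e2
  · have hAB : ∀ a ∈ A, ∀ b ∈ B, x a ≤ x b := by
      intro a ha b hb
      refine key1 a ?_ b hb
      rw [Finset.mem_sdiff]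
      exact ⟨ha, fun hab => hC ⟨a, Finset.mem_inter.mpr ⟨ha, hab⟩⟩⟩
    exact avg_le_avg hAne hBne hAB
end nb

section HK
variable {n : ℕ} {ε : ℝ} {x : ℕ → Fin n → ℝ}

lemma x_succ (hupd : ∀ t i, x (t + 1) i = hkAvg ε (x t) i) (t : ℕ) (i : Fin n) :
    x (t+1) i = (∑ j ∈ nbhd ε (x t) i, x t j) / ((nbhd ε (x t) i).card : ℝ) := by
  rw [hupd]; rfl

lemma hk_step_mono (hε : 0 < ε) (hupd : ∀ t i, x (t + 1) i = hkAvg ε (x t) i)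
    (t : ℕ) {i j : Fin n} (hij : x t i ≤ x t j) : x (t+1) i ≤ x (t+1) j := by
  rw [hupd, hupd]; exact hkAvg_mono hε (x t) hij

lemma hk_chain_mono (hε : 0 < ε) (hupd : ∀ t i, x (t + 1) i = hkAvg ε (x t) i)
    {T t : ℕ} (hT : T ≤ t) {i j : Fin n} (hij : x T i ≤ x T j) : x t i ≤ x t j := by
  induction t, hT using Nat.le_induction with
  | base => exact hij
  | succ t ht ih => exact hk_step_mono hε hupd t ih

lemma hk_bounds (hε : 0 < ε) (hupd : ∀ t i, x (t + 1) i = hkAvg ε (x t) i)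
    (hx0 : ∀ i, x 0 i ∈ Set.Icc (0:ℝ) 1) (t : ℕ) (i : Fin n) :
    0 ≤ x t i ∧ x t i ≤ 1 := by
  induction t generalizing i with
  | zero => exact ⟨(hx0 i).1, (hx0 i).2⟩
  | succ t ih =>
    rw [x_succ hupd]
    have hne := nbhd_nonempty hε (x t) i
    exact ⟨le_avg hne fun j _ => (ih j).1, avg_le hne fun j _ => (ih j).2⟩

lemma nbhd_subset_of_iso {G : Finset (Fin n)} {t : ℕ}
    (hiso : ∀ i ∈ G, ∀ j, j ∉ G → ε < |x t j - x t i|) {i : Fin n} (hi : i ∈ G) :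
    nbhd ε (x t) i ⊆ G := by
  intro k hk
  by_contra hkG
  exact absurd (mem_nbhd.mp hk) (not_le.mpr (hiso i hi k hkG))

lemma hk_pull (hε : 0 < ε) (hupd : ∀ t i, x (t + 1) i = hkAvg ε (x t) i)
    {G : Finset (Fin n)} (hGne : G.Nonempty) {t : ℕ}
    (hiso : ∀ i ∈ G, ∀ j, j ∉ G → ε < |x t j - x t i|)
    {i j : Fin n} (hi : i ∈ G) (hj : j ∈ G) (hnear : |x t j - x t i| ≤ ε) :
    G.inf' hGne (x t) + (x t j - G.inf' hGne (x t)) / (n:ℝ) ≤ x (t+1) i := by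
  set m := G.inf' hGne (x t) with hm
  have hnpos : 0 < n := i.pos
  set N := nbhd ε (x t) i with hN
  have hNsub : N ⊆ G := nbhd_subset_of_iso hiso hi
  have hjN : j ∈ N := mem_nbhd.mpr hnear
  have hNne : N.Nonempty := ⟨j, hjN⟩
  have hc1 : 1 ≤ N.card := Finset.card_pos.mpr hNne
  have hcn : N.card ≤ n := by
    simpa using Finset.card_le_univ N
  have hcpos : (0:ℝ) < (N.card : ℝ) := by exact_mod_cast Finset.card_pos.mpr hNne
  have hnR : (0:ℝ) < (n:ℝ) := by exact_mod_cast hnpos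
  have hmle : m ≤ x t j := Finset.inf'_le _ hj
  have hsum : x t j + ((N.card : ℝ) - 1) * m ≤ ∑ k ∈ N, x t k := by
    have herase : ∑ k ∈ N.erase j, x t k + x t j = ∑ k ∈ N, x t k :=
      Finset.sum_erase_add N _ hjN
    have hlow : (N.erase j).card • m ≤ ∑ k ∈ N.erase j, x t k :=
      Finset.card_nsmul_le_sum _ _ _ fun k hk =>
        Finset.inf'_le _ (hNsub (Finset.erase_subset _ _ hk))
    have hcard : ((N.erase j).card : ℝ) = (N.card : ℝ) - 1 := by
      rw [Finset.card_erase_of_mem hjN, Nat.cast_sub hc1, Nat.cast_one]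
    rw [nsmul_eq_mul, hcard] at hlow
    linarith
  have hfin : m + (x t j - m) / (n:ℝ) ≤ (x t j + ((N.card : ℝ) - 1) * m) / (N.card : ℝ) := by
    rw [le_div_iff₀ hcpos]
    have hq : 0 ≤ x t j - m := by linarith
    have hcnR : (N.card : ℝ) ≤ (n:ℝ) := by exact_mod_cast hcn
    have h1 : (x t j - m) / (n:ℝ) * (N.card : ℝ) ≤ (x t j - m) := by
      rw [div_mul_eq_mul_div, div_le_iff₀ hnR]
      nlinarith
    nlinarith
  calc m + (x t j - m) / (n:ℝ) ≤ (x t j + ((N.card : ℝ) - 1) * m) / (N.card : ℝ) := hfin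
    _ ≤ (∑ k ∈ N, x t k) / (N.card : ℝ) := by
        exact (div_le_div_iff_of_pos_right hcpos).mpr hsum
    _ = x (t+1) i := (x_succ hupd t i).symm

lemma tendsto_of_mono_from {f : ℕ → ℝ} {T : ℕ}
    (hmono : ∀ s, T ≤ s → f s ≤ f (s+1)) (hbdd : ∀ s, T ≤ s → f s ≤ 1) :
    ∃ l : ℝ, Filter.Tendsto f Filter.atTop (nhds l) := by
  have hg : Monotone (fun s => f (s + T)) := by
    apply monotone_nat_of_le_succ
    intro s
    have := hmono (s + T) (Nat.le_add_left _ _)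
    simpa [Nat.add_right_comm] using this
  have hbdd' : BddAbove (Set.range fun s => f (s + T)) := by
    refine ⟨1, ?_⟩
    rintro y ⟨s, rfl⟩
    exact hbdd (s + T) (Nat.le_add_left _ _)
  refine ⟨⨆ s, f (s + T), ?_⟩
  have := tendsto_atTop_ciSup hg hbdd'
  exact (Filter.tendsto_add_atTop_iff_nat T).mp this

end HK

section Main
variable {n : ℕ} {ε : ℝ} {x : ℕ → Fin n → ℝ}

lemma hk_main (hε : 0 < ε) (hupd : ∀ t i, x (t + 1) i = hkAvg ε (x t) i)
    (hx0 : ∀ i, x 0 i ∈ Set.Icc (0:ℝ) 1) :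
    ∀ (mb T : ℕ) (G : Finset (Fin n)), G.Nonempty → G.card ≤ mb →
    (∀ s, T ≤ s → ∀ i ∈ G, ∀ j, j ∉ G → ε < |x s j - x s i|) →
    ∃ T₀, T ≤ T₀ ∧ (∀ t, T₀ ≤ t → ∀ i ∈ G, x t i = x T₀ i) ∧
      (∀ i ∈ G, ∀ j ∈ G, x T₀ i = x T₀ j ∨ ε < |x T₀ i - x T₀ j|) := by
  intro mb
  induction mb with
  | zero =>
    intro T G hGne hcard _
    exact absurd (Finset.card_pos.mpr hGne) (by omega)
  | succ mb IH =>
    intro T G hGne hcard hiso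
    by_cases hsplit : ∃ t, T ≤ t ∧ ∃ i ∈ G, (∃ j ∈ G, x t i < x t j) ∧
        ∀ j ∈ G, x t j ≤ x t i ∨ x t i + ε < x t j
    · -- the group splits at time t : recurse on both halves
      obtain ⟨t, hTt, i, hiG, ⟨j₀, hj₀G, hj₀⟩, hsep⟩ := hsplit
      set G₁ := G.filter (fun j => x t j ≤ x t i) with hG₁
      set G₂ := G.filter (fun j => ¬ x t j ≤ x t i) with hG₂
      have hiG₁ : i ∈ G₁ := Finset.mem_filter.mpr ⟨hiG, le_rfl⟩
      have hj₀G₂ : j₀ ∈ G₂ := Finset.mem_filter.mpr ⟨hj₀G, not_le.mpr hj₀⟩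
      have hG₂ne : G₂.Nonempty := ⟨j₀, hj₀G₂⟩
      have hG₁ne : G₁.Nonempty := ⟨i, hiG₁⟩
      set c₁ := x t i with hc₁
      set c₂ := G₂.inf' hG₂ne (x t) with hc₂def
      have hc₂ : c₁ + ε < c₂ := by
        rw [hc₂def, Finset.lt_inf'_iff]
        intro b hb
        rcases Finset.mem_filter.mp hb with ⟨hbG, hble⟩
        rcases hsep b hbG with h | h
        · exact absurd h hble
        · exact h
      have hmemG : ∀ k ∈ G, k ∉ G₁ → k ∈ G₂ := by
        intro k hk hk1
        exact Finset.mem_filter.mpr ⟨hk, fun hle => hk1 (Finset.mem_filter.mpr ⟨hk, hle⟩)⟩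
      -- persistence of the split
      have hpers : ∀ s, t ≤ s → (∀ a ∈ G₁, x s a ≤ c₁) ∧ (∀ b ∈ G₂, c₂ ≤ x s b) := by
        intro s hs
        induction s, hs using Nat.le_induction with
        | base =>
          exact ⟨fun a ha => (Finset.mem_filter.mp ha).2, fun b hb => Finset.inf'_le _ hb⟩
        | succ s hs ihs =>
          have hTs : T ≤ s := hTt.trans hs
          constructor
          · intro a ha
            have haG : a ∈ G := Finset.filter_subset _ _ ha
            have hsub : nbhd ε (x s) a ⊆ G₁ := by
              intro k hk
              have hkG : k ∈ G := nbhd_subset_of_iso (hiso s hTs) haG hk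
              by_contra hk1
              have hkG₂ : k ∈ G₂ := hmemG k hkG hk1
              have h1 : x s a ≤ c₁ := ihs.1 a ha
              have h2 : c₂ ≤ x s k := ihs.2 k hkG₂
              have := mem_nbhd.mp hk
              rw [abs_le] at this
              linarith
            rw [x_succ hupd]
            exact avg_le (nbhd_nonempty hε (x s) a) fun k hk => ihs.1 k (hsub hk)
          · intro b hb
            have hbG : b ∈ G := Finset.filter_subset _ _ hb
            have hsub : nbhd ε (x s) b ⊆ G₂ := by
              intro k hk
              have hkG : k ∈ G := nbhd_subset_of_iso (hiso s hTs) hbG hk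
              by_contra hk2
              have hkG₁ : k ∈ G₁ := by
                by_contra hk1
                exact hk2 (hmemG k hkG hk1)
              have h1 : x s k ≤ c₁ := ihs.1 k hkG₁
              have h2 : c₂ ≤ x s b := ihs.2 b hb
              have := mem_nbhd.mp hk
              rw [abs_le] at this
              linarith
            rw [x_succ hupd]
            exact le_avg (nbhd_nonempty hε (x s) b) fun k hk => ihs.2 k (hsub hk)
      -- isolation of the two halves
      have hiso₁ : ∀ s, t ≤ s → ∀ a ∈ G₁, ∀ j, j ∉ G₁ → ε < |x s j - x s a| := by
        intro s hs a ha j hj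
        by_cases hjG : j ∈ G
        · have hjG₂ : j ∈ G₂ := hmemG j hjG hj
          have h1 : x s a ≤ c₁ := (hpers s hs).1 a ha
          have h2 : c₂ ≤ x s j := (hpers s hs).2 j hjG₂
          have : ε < x s j - x s a := by linarith
          exact this.trans_le (le_abs_self _)
        · exact hiso s (hTt.trans hs) a (Finset.filter_subset _ _ ha) j hjG
      have hiso₂ : ∀ s, t ≤ s → ∀ a ∈ G₂, ∀ j, j ∉ G₂ → ε < |x s j - x s a| := by
        intro s hs a ha j hj
        by_cases hjG : j ∈ G
        · have hjG₁ : j ∈ G₁ := by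
            by_contra hj1
            exact hj (hmemG j hjG hj1)
          have h1 : x s j ≤ c₁ := (hpers s hs).1 j hjG₁
          have h2 : c₂ ≤ x s a := (hpers s hs).2 a ha
          have : ε < x s a - x s j := by linarith
          rw [abs_sub_comm]
          exact this.trans_le (le_abs_self _)
        · exact hiso s (hTt.trans hs) a (Finset.filter_subset _ _ ha) j hjG
      -- cardinalities drop
      have hcard₁ : G₁.card ≤ mb := by
        have : G₁.card < G.card := by
          apply Finset.card_lt_card
          rw [Finset.ssubset_def]
          refine ⟨Finset.filter_subset _ _, fun hcon => ?_⟩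
          exact absurd (Finset.mem_filter.mp (hcon hj₀G)).2 (by simpa using hj₀)
        omega
      have hcard₂ : G₂.card ≤ mb := by
        have : G₂.card < G.card := by
          apply Finset.card_lt_card
          rw [Finset.ssubset_def]
          refine ⟨Finset.filter_subset _ _, fun hcon => ?_⟩
          exact absurd (Finset.mem_filter.mp (hcon hiG)).2 (by simp)
        omega
      obtain ⟨T₁, hT₁, hfr₁, hsep₁⟩ := IH t G₁ hG₁ne hcard₁ hiso₁
      obtain ⟨T₂, hT₂, hfr₂, hsep₂⟩ := IH t G₂ hG₂ne hcard₂ hiso₂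
      refine ⟨max T₁ T₂, hTt.trans (hT₁.trans (le_max_left _ _)), ?_, ?_⟩
      · intro s hs k hk
        by_cases hk1 : k ∈ G₁
        · rw [hfr₁ s ((le_max_left T₁ T₂).trans hs) k hk1,
            hfr₁ (max T₁ T₂) (le_max_left _ _) k hk1]
        · have hk2 : k ∈ G₂ := hmemG k hk hk1
          rw [hfr₂ s ((le_max_right T₁ T₂).trans hs) k hk2,
            hfr₂ (max T₁ T₂) (le_max_right _ _) k hk2]
      · intro a ha b hb
        have hfrz : ∀ k ∈ G, x (max T₁ T₂) k = if k ∈ G₁ then x T₁ k else x T₂ k := by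
          intro k hk
          by_cases hk1 : k ∈ G₁
          · rw [if_pos hk1]; exact hfr₁ (max T₁ T₂) (le_max_left _ _) k hk1
          · rw [if_neg hk1]; exact hfr₂ (max T₁ T₂) (le_max_right _ _) k (hmemG k hk hk1)
        by_cases ha1 : a ∈ G₁ <;> by_cases hb1 : b ∈ G₁
        · rw [hfrz a ha, hfrz b hb, if_pos ha1, if_pos hb1]
          exact hsep₁ a ha1 b hb1
        · right
          have hb2 : b ∈ G₂ := hmemG b hb hb1
          have h1 : x (max T₁ T₂) a ≤ c₁ :=
            (hpers _ (hT₁.trans (le_max_left _ _))).1 a ha1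
          have h2 : c₂ ≤ x (max T₁ T₂) b :=
            (hpers _ (hT₁.trans (le_max_left _ _))).2 b hb2
          rw [abs_sub_comm]
          have : ε < x (max T₁ T₂) b - x (max T₁ T₂) a := by linarith
          exact this.trans_le (le_abs_self _)
        · right
          have ha2 : a ∈ G₂ := hmemG a ha ha1
          have h1 : x (max T₁ T₂) b ≤ c₁ :=
            (hpers _ (hT₁.trans (le_max_left _ _))).1 b hb1
          have h2 : c₂ ≤ x (max T₁ T₂) a :=
            (hpers _ (hT₁.trans (le_max_left _ _))).2 a ha2
          have : ε < x (max T₁ T₂) a - x (max T₁ T₂) b := by linarith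
          exact this.trans_le (le_abs_self _)
        · have ha2 : a ∈ G₂ := hmemG a ha ha1
          have hb2 : b ∈ G₂ := hmemG b hb hb1
          rw [hfrz a ha, hfrz b hb, if_neg ha1, if_neg hb1]
          exact hsep₂ a ha2 b hb2
    · -- the group stays ε-connected: all values converge to a common limit
      push_neg at hsplit
      have hconn : ∀ t, T ≤ t → ∀ i ∈ G, (∃ j ∈ G, x t i < x t j) →
          ∃ j ∈ G, x t i < x t j ∧ x t j ≤ x t i + ε := by
        intro t ht i hi hex
        obtain ⟨j, hjG, h1, h2⟩ := hsplit t ht i hi hex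
        exact ⟨j, hjG, h1, h2⟩
      -- the minimum over the group
      set m : ℕ → ℝ := fun t => G.inf' hGne (x t) with hmdef
      have hnbsub : ∀ s, T ≤ s → ∀ i ∈ G, nbhd ε (x s) i ⊆ G :=
        fun s hs i hi => nbhd_subset_of_iso (hiso s hs) hi
      have hstep_lb : ∀ s, T ≤ s → ∀ k ∈ G, m s ≤ x (s+1) k := by
        intro s hs k hk
        rw [x_succ hupd]
        exact le_avg (nbhd_nonempty hε (x s) k)
          fun r hr => Finset.inf'_le _ (hnbsub s hs k hk hr)
      have hmmono : ∀ s, T ≤ s → m s ≤ m (s+1) := by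
        intro s hs
        exact Finset.le_inf' _ _ fun k hk => hstep_lb s hs k hk
      have hmbdd : ∀ s, T ≤ s → m s ≤ 1 := by
        intro s _
        obtain ⟨i₀, hi₀⟩ := hGne
        exact (Finset.inf'_le _ hi₀).trans (hk_bounds hε hupd hx0 s i₀).2
      obtain ⟨l, hl⟩ := tendsto_of_mono_from hmmono hmbdd
      have hnR : (0:ℝ) < (n:ℝ) := by
        obtain ⟨i₀, _⟩ := hGne
        exact_mod_cast i₀.pos
      -- every agent of the group converges to l
      have key : ∀ k : ℕ, ∀ i ∈ G, (G.filter fun j => x T j < x T i).card = k →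
          Filter.Tendsto (fun t => x t i) Filter.atTop (nhds l) := by
        intro k
        induction k using Nat.strong_induction_on with
        | _ k IHk =>
          intro i hi hk
          by_cases hS : (G.filter fun j => x T j < x T i).Nonempty
          · obtain ⟨i', hi'S, hi'max⟩ := Finset.exists_max_image _ (x T) hS
            have hi'G : i' ∈ G := (Finset.mem_filter.mp hi'S).1
            have hlt : x T i' < x T i := (Finset.mem_filter.mp hi'S).2
            have hcardlt : (G.filter fun j => x T j < x T i').card < k := by
              rw [← hk]
              apply Finset.card_lt_card
              rw [Finset.ssubset_def]
              constructor
              · intro a ha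
                rw [Finset.mem_filter] at ha ⊢
                exact ⟨ha.1, ha.2.trans hlt⟩
              · intro hcon
                exact absurd (Finset.mem_filter.mp (hcon hi'S)).2 (lt_irrefl _)
            have htendi' := IHk _ hcardlt i' hi'G rfl
            have htendi'1 : Filter.Tendsto (fun t => x (t+1) i') Filter.atTop (nhds l) := by
              have := htendi'.comp (Filter.tendsto_add_atTop_nat 1)
              exact this
            have hbound : ∀ t, T ≤ t → m t ≤ x t i ∧
                x t i ≤ max (x t i') (m t + n * (x (t+1) i' - m t)) := by
              intro t ht
              refine ⟨Finset.inf'_le _ hi, ?_⟩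
              by_cases hcase : x t i ≤ x t i'
              · exact le_max_of_le_left hcase
              · push_neg at hcase
                obtain ⟨j, hjG, hj1, hj2⟩ := hconn t ht i' hi'G ⟨i, hi, hcase⟩
                have hij : x t i ≤ x t j := by
                  have h1 : ¬ x T j ≤ x T i' := fun hc =>
                    absurd (hk_chain_mono hε hupd ht hc) (not_le.mpr hj1)
                  have hjS : j ∉ G.filter (fun j => x T j < x T i) :=
                    fun hjS => h1 (hi'max j hjS)
                  have h2 : ¬ x T j < x T i := fun hc => hjS (Finset.mem_filter.mpr ⟨hjG, hc⟩)
                  exact hk_chain_mono hε hupd ht (not_lt.mp h2)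
                have hnear : |x t j - x t i'| ≤ ε := by
                  rw [abs_le]; constructor <;> linarith
                have hpull := hk_pull hε hupd hGne (hiso t ht) hi'G hjG hnear
                have h3 : (x t j - m t) / (n:ℝ) ≤ x (t+1) i' - m t := by linarith
                have h4 := (div_le_iff₀ hnR).mp h3
                have h5 : x t j ≤ m t + n * (x (t+1) i' - m t) := by nlinarith
                exact le_max_of_le_right (hij.trans h5)
            have htop : Filter.Tendsto
                (fun t => max (x t i') (m t + (n:ℝ) * (x (t+1) i' - m t)))
                Filter.atTop (nhds (max l (l + n * (l - l)))) :=
              Filter.Tendsto.max htendi' (hl.add (Filter.Tendsto.const_mul _ (htendi'1.sub hl)))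
            rw [show max l (l + (n:ℝ)*(l-l)) = l by simp] at htop
            refine tendsto_of_tendsto_of_tendsto_of_le_of_le' hl htop ?_ ?_
            · filter_upwards [Filter.eventually_ge_atTop T] with t ht
              exact (hbound t ht).1
            · filter_upwards [Filter.eventually_ge_atTop T] with t ht
              exact (hbound t ht).2
          · -- i is a minimal agent of the group
            have hmin : ∀ j ∈ G, x T i ≤ x T j := by
              intro j hj
              by_contra hcon
              exact hS ⟨j, Finset.mem_filter.mpr ⟨hj, not_le.mp hcon⟩⟩
            have heq : ∀ t, T ≤ t → x t i = m t := by
              intro t ht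
              apply le_antisymm
              · exact Finset.le_inf' _ _ fun j hj => hk_chain_mono hε hupd ht (hmin j hj)
              · exact Finset.inf'_le _ hi
            apply hl.congr'
            filter_upwards [Filter.eventually_ge_atTop T] with t ht
            exact (heq t ht).symm
      have hall : ∀ i ∈ G, Filter.Tendsto (fun t => x t i) Filter.atTop (nhds l) :=
        fun i hi => key _ i hi rfl
      -- eventually everyone is within ε/2 of l
      have hev : ∀ᶠ t in Filter.atTop, T ≤ t ∧ ∀ i ∈ G, |x t i - l| < ε/2 := by
        refine (Filter.eventually_ge_atTop T).and ?_
        rw [Filter.eventually_all_finset]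
        intro i hi
        have := Metric.tendsto_nhds.mp (hall i hi) (ε/2) (by positivity)
        simpa [Real.dist_eq] using this
      obtain ⟨t₁, hTt₁, hclose⟩ := hev.exists
      have hcl₁ : ∀ i ∈ G, ∀ j ∈ G, |x t₁ j - x t₁ i| ≤ ε := by
        intro i hi j hj
        have h1 := hclose i hi
        have h2 := hclose j hj
        rw [abs_lt] at h1 h2
        rw [abs_le]
        constructor <;> linarith
      have hnbhdG : ∀ s, T ≤ s → (∀ i ∈ G, ∀ j ∈ G, |x s j - x s i| ≤ ε) →
          ∀ i ∈ G, nbhd ε (x s) i = G := by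
        intro s hs hcl i hi
        refine Finset.Subset.antisymm (hnbsub s hs i hi) fun j hj => mem_nbhd.mpr (hcl i hi j hj)
      have hcard0 : (0:ℝ) < (G.card : ℝ) := by exact_mod_cast Finset.card_pos.mpr hGne
      set v := (∑ j ∈ G, x t₁ j) / (G.card : ℝ) with hvdef
      have hcons : ∀ i ∈ G, x (t₁+1) i = v := by
        intro i hi
        rw [x_succ hupd, hnbhdG t₁ hTt₁ hcl₁ i hi]
      have hfreeze : ∀ s, t₁ + 1 ≤ s → ∀ i ∈ G, x s i = v := by
        intro s hs
        induction s, hs using Nat.le_induction with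
        | base => exact hcons
        | succ s hs ihs =>
          intro i hi
          have hTs : T ≤ s := hTt₁.trans ((Nat.le_succ t₁).trans hs)
          have hcl' : ∀ a ∈ G, ∀ b ∈ G, |x s b - x s a| ≤ ε := by
            intro a ha b hb
            rw [ihs a ha, ihs b hb]
            simpa using hε.le
          rw [x_succ hupd, hnbhdG s hTs hcl' i hi]
          rw [Finset.sum_congr rfl (fun j hj => ihs j hj), Finset.sum_const, nsmul_eq_mul]
          field_simp
      refine ⟨t₁ + 1, hTt₁.trans (Nat.le_succ t₁), ?_, ?_⟩
      · intro s hs i hi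
        rw [hfreeze s hs i hi, hfreeze (t₁+1) le_rfl i hi]
      · intro a ha b hb
        left
        rw [hfreeze (t₁+1) le_rfl a ha, hfreeze (t₁+1) le_rfl b hb]

end Main


/-- The noise-free HK model converges in finite time to fixed values, and any two limit
values either coincide or are more than `ε` apart. -/
theorem hk_noise_free_convergence (n : ℕ) (hn : 0 < n) (ε : ℝ) (hε : 0 < ε)
    (x : ℕ → Fin n → ℝ) (hx0 : ∀ i, x 0 i ∈ Set.Icc (0:ℝ) 1)
    (hupd : ∀ t i, x (t + 1) i = hkAvg ε (x t) i) :
    ∃ T₀ : ℕ, ∃ xs : Fin n → ℝ, (∀ i, xs i ∈ Set.Icc (0:ℝ) 1) ∧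
      (∀ t, T₀ ≤ t → ∀ i, x t i = xs i) ∧
      ∀ i j, xs i = xs j ∨ ε < |xs i - xs j| := by

  have hGne : (Finset.univ : Finset (Fin n)).Nonempty := ⟨⟨0, hn⟩, Finset.mem_univ _⟩
  obtain ⟨T₀, -, hfr, hsep⟩ := hk_main hε hupd hx0 n 0 Finset.univ hGne (by simp)
    (fun s _ i _ j hj => absurd (Finset.mem_univ j) hj)
  refine ⟨T₀, x T₀, fun i => ⟨(hk_bounds hε hupd hx0 T₀ i).1, (hk_bounds hε hupd hx0 T₀ i).2⟩,
    fun t ht i => hfr t ht i (Finset.mem_univ i),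
    fun i j => hsep i (Finset.mem_univ i) j (Finset.mem_univ j)⟩
end

section
/- In the HK model, let m(t) be an agent attaining the minimum opinion at time t and K(t) = max number of agents within distance ε of m(t) (agents relabeled so x_1(t) ≤ … ≤ x_n(t)). If the interaction graph is connected, d_V(t) > ε, and the minimum increases by at most d₀ at step t (where 0 < d₀ < ε/(2n²+2n+1)), then x_i(t) − x_{m(t)}(t) ≤ K(t)·d₀ for all i ≤ K(t), and agent K(t) increases its value by more than (K(t)+1)·d₀ at step t+1. -/
open scoped Classical

set_option maxHeartbeats 1000000

/-- Average over a subset is at most the average over a superset whose extra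
elements dominate every element of the subset. -/
lemma hk_avg_le_avg_of_high {α : Type*} [DecidableEq α] (f : α → ℝ) (T S : Finset α)
    (hTS : T ⊆ S) (hT : T.Nonempty)
    (hhigh : ∀ b ∈ S, b ∉ T → ∀ a ∈ T, f a ≤ f b) :
    (∑ a ∈ T, f a) / T.card ≤ (∑ a ∈ S, f a) / S.card := by
  have hS : S.Nonempty := hT.mono hTS
  have hTc : (0:ℝ) < T.card := by exact_mod_cast hT.card_pos
  have hSc : (0:ℝ) < S.card := by exact_mod_cast hS.card_pos
  have hsum : ∑ a ∈ S, f a = ∑ a ∈ T, f a + ∑ b ∈ S \ T, f b := by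
    rw [← Finset.sum_sdiff hTS]; ring
  have hcardn : T.card + (S \ T).card = S.card := by
    rw [Finset.card_sdiff_of_subset hTS]
    have := Finset.card_le_card hTS
    omega
  have hcard : (S.card : ℝ) = T.card + (S \ T).card := by exact_mod_cast hcardn.symm
  have key : ((S \ T).card : ℝ) * ∑ a ∈ T, f a ≤ (T.card : ℝ) * ∑ b ∈ S \ T, f b := by
    have h1 : ∑ _b ∈ S \ T, (∑ a ∈ T, f a) ≤ ∑ b ∈ S \ T, (T.card : ℝ) * f b := by
      apply Finset.sum_le_sum
      intro b hb
      have hbS : b ∈ S := (Finset.mem_sdiff.mp hb).1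
      have hbT : b ∉ T := (Finset.mem_sdiff.mp hb).2
      have := Finset.sum_le_card_nsmul T f (f b) (fun a ha => hhigh b hbS hbT a ha)
      simpa [nsmul_eq_mul] using this
    simpa [Finset.sum_const, nsmul_eq_mul, Finset.mul_sum] using h1
  rw [div_le_div_iff₀ hTc hSc, hsum, hcard]
  nlinarith [key]

/-- Average over a superset is at most the average over a subset whose removed
elements are below every element of the subset. -/
lemma hk_avg_le_avg_of_low {α : Type*} [DecidableEq α] (f : α → ℝ) (T S : Finset α)
    (hTS : T ⊆ S) (hT : T.Nonempty)
    (hlow : ∀ b ∈ S, b ∉ T → ∀ a ∈ T, f b ≤ f a) :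
    (∑ a ∈ S, f a) / S.card ≤ (∑ a ∈ T, f a) / T.card := by
  have h := hk_avg_le_avg_of_high (fun a => -(f a)) T S hTS hT
    (fun b hb hb' a ha => by simpa using hlow b hb hb' a ha)
  simp only [Finset.sum_neg_distrib, neg_div] at h
  linarith

/-- Agents sorted increasingly, with the minimal agent having exactly the first `K` agents
(1-indexed `1, …, K`) as neighbors.  If the `ε`-graph is connected, the diameter exceeds
`ε`, and the minimum increases by at most `d₀` at this step (with
`0 < d₀ < ε/(2n² + 2n + 1)`), then all neighbors of the minimal agent are within `K·d₀`
of it, and agent `K` (1-indexed; Fin-index `K-1`) increases by more than `(K+1)·d₀`. -/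
theorem hk_min_agent_progress (n : ℕ) (ε d₀ : ℝ) (hε : 0 < ε)
    (K : ℕ) (hK1 : 1 ≤ K) (hKn : K < n)
    (hd₀ : 0 < d₀) (hd₀' : d₀ < ε / (2 * (n : ℝ) ^ 2 + 2 * n + 1))
    (x x' : Fin n → ℝ)
    (hsorted : ∀ i j : Fin n, i ≤ j → x i ≤ x j)
    (hupd : ∀ i, x' i = hkAvg ε x i)
    (hKdef : ∀ j : Fin n, |x j - x ⟨0, by omega⟩| ≤ ε ↔ (j : ℕ) < K)
    (hconn : ∀ i j : Fin n, Relation.ReflTransGen (fun u v => |x u - x v| ≤ ε) i j)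
    (hdiam : ∃ i j, ε < |x i - x j|)
    (hmin : (⨅ i, x' i) - x ⟨0, by omega⟩ ≤ d₀) :
    (∀ i : Fin n, (i : ℕ) < K → x i - x ⟨0, by omega⟩ ≤ (K : ℝ) * d₀) ∧
    ((K : ℝ) + 1) * d₀ < x' ⟨K - 1, by omega⟩ - x ⟨K - 1, by omega⟩ := by
  have hn : 0 < n := by omega
  set i0 : Fin n := ⟨0, by omega⟩ with hi0
  set kk : Fin n := ⟨K - 1, by omega⟩ with hkk
  set kK : Fin n := ⟨K, hKn⟩ with hkK
  have hi0val : (i0 : ℕ) = 0 := rfl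
  have hkkval : (kk : ℕ) = K - 1 := rfl
  have hkKval : (kK : ℕ) = K := rfl
  -- basic order facts
  have hx0le : ∀ j : Fin n, x i0 ≤ x j := fun j => hsorted i0 j (by simp [hi0, Fin.le_def])
  have hband : ∀ j : Fin n, (j : ℕ) < K → x j ≤ x i0 + ε := by
    intro j hj
    have := (hKdef j).mpr hj
    have := abs_le.mp this
    linarith [this.2]
  have hout : ∀ j : Fin n, K ≤ (j : ℕ) → x i0 + ε < x j := by
    intro j hj
    have h1 : ¬ |x j - x i0| ≤ ε := by
      intro h; exact absurd ((hKdef j).mp h) (by omega)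
    have h2 := hx0le j
    rw [abs_of_nonneg (by linarith)] at h1
    linarith [lt_of_not_ge h1]
  -- neighborhood of i0
  have hS0 : (Finset.univ.filter fun j => |x j - x i0| ≤ ε)
      = Finset.univ.filter (fun j : Fin n => (j : ℕ) < K) := by
    apply Finset.filter_congr
    intro j _
    simpa using hKdef j
  have hS0' : Finset.univ.filter (fun j : Fin n => (j : ℕ) < K) = Finset.Iio kK := by
    ext j; simp [Fin.lt_def, hkK]
  have hcard0 : (Finset.univ.filter fun j => |x j - x i0| ≤ ε).card = K := by
    rw [hS0, hS0', Fin.card_Iio]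
  -- members of own neighborhood
  have hmem_self : ∀ i : Fin n, i ∈ (Finset.univ.filter fun j => |x j - x i| ≤ ε) := by
    intro i; simp [abs_nonneg, le_of_lt hε]
  -- Claim A : x' i0 ≤ x' i for every i
  have hKpos : 0 < K := hK1
  have hKposR : (0:ℝ) < K := by exact_mod_cast hKpos
  have hA : ∀ i : Fin n, hkAvg ε x i0 ≤ hkAvg ε x i := by
    intro i
    set Si := Finset.univ.filter fun j => |x j - x i| ≤ ε with hSi
    have hiSi : i ∈ Si := hmem_self i
    have havg0_le : hkAvg ε x i0 ≤ x i0 + ε := by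
      rw [hkAvg, hcard0, hS0]
      rw [div_le_iff₀ hKposR]
      calc ∑ j ∈ Finset.univ.filter (fun j : Fin n => (j:ℕ) < K), x j
          ≤ ∑ j ∈ Finset.univ.filter (fun j : Fin n => (j:ℕ) < K), (x i0 + ε) := by
            apply Finset.sum_le_sum; intro j hj
            exact hband j (by simpa using hj)
        _ = (x i0 + ε) * K := by
            rw [Finset.sum_const, ← hS0, hcard0, nsmul_eq_mul]; ring
    by_cases hiK : (i : ℕ) < K
    · -- S0 ⊆ Si and extras are high
      rw [hkAvg, hkAvg, hS0]
      apply hk_avg_le_avg_of_high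
      · intro j hj
        simp only [Finset.mem_filter, Finset.mem_univ, true_and] at hj ⊢
        have h1 := hband j hj
        have h2 := hband i hiK
        have h3 := hx0le j
        have h4 := hx0le i
        rw [abs_le]; constructor <;> linarith
      · exact ⟨i0, Finset.mem_filter.mpr ⟨Finset.mem_univ _, hKpos⟩⟩
      · intro b hbS hbT a haT
        simp only [Finset.mem_filter, Finset.mem_univ, true_and] at hbT haT
        have hbK : K ≤ (b : ℕ) := by omega
        have := hout b hbK
        have := hband a haT
        linarith
    · -- i outside the band
      by_cases hE : ∃ u ∈ Si, (u : ℕ) < K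
      · obtain ⟨u₀, hu₀Si, hu₀K⟩ := hE
        set W := Si.filter (fun j : Fin n => (j : ℕ) < K) with hW
        have hWne : W.Nonempty := ⟨u₀, Finset.mem_filter.mpr ⟨hu₀Si, hu₀K⟩⟩
        set u := W.min' hWne with hu
        have huW : u ∈ W := Finset.min'_mem W hWne
        have huSi : u ∈ Si := (Finset.mem_filter.mp huW).1
        have huK : (u : ℕ) < K := (Finset.mem_filter.mp huW).2
        have hui : u ≤ i := by
          rw [Fin.le_def]; omega
        have hxui : x i - x u ≤ ε := by
          have := (Finset.mem_filter.mp huSi).2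
          have := abs_le.mp this
          have := hsorted u i hui
          linarith [abs_le.mp (Finset.mem_filter.mp huSi).2]
        set T' := Finset.univ.filter (fun j : Fin n => u ≤ j ∧ (j : ℕ) < K) with hT'
        have hT'ne : T'.Nonempty := by
          refine ⟨u, ?_⟩
          simp only [hT', Finset.mem_filter, Finset.mem_univ, true_and]
          exact ⟨le_refl u, huK⟩
        have hT'Si : T' ⊆ Si := by
          intro j hj
          simp only [hT', Finset.mem_filter, Finset.mem_univ, true_and] at hj
          obtain ⟨huj, hjK⟩ := hj
          have hji : j ≤ i := by rw [Fin.le_def]; omega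
          have h1 := hsorted u j huj
          have h2 := hsorted j i hji
          simp only [hSi, Finset.mem_filter, Finset.mem_univ, true_and]
          rw [abs_le]; constructor <;> linarith
        -- avg over [0,K) ≤ avg over T' = [u,K)
        have step1 : hkAvg ε x i0 ≤ (∑ a ∈ T', x a) / T'.card := by
          rw [hkAvg, hS0]
          apply hk_avg_le_avg_of_low
          · intro j hj
            simp only [hT', Finset.mem_filter, Finset.mem_univ, true_and] at hj
            simp [hj.2]
          · exact hT'ne
          · intro b hbS hbT a haT
            simp only [hT', Finset.mem_filter, Finset.mem_univ, true_and] at hbS hbT haT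
            have hbu : b < u := by
              by_contra h
              exact hbT ⟨le_of_not_gt h, hbS⟩
            exact hsorted b a (le_trans (le_of_lt hbu) haT.1)
        -- avg over T' ≤ avg over Si
        have step2 : (∑ a ∈ T', x a) / T'.card ≤ hkAvg ε x i := by
          rw [hkAvg]
          apply hk_avg_le_avg_of_high _ _ _ hT'Si hT'ne
          intro b hbS hbT a haT
          simp only [hT', Finset.mem_filter, Finset.mem_univ, true_and] at hbT haT
          have hbK : K ≤ (b : ℕ) := by
            by_contra h
            push_neg at h
            apply hbT
            refine ⟨?_, h⟩
            exact Finset.min'_le W b (Finset.mem_filter.mpr ⟨hbS, h⟩)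
          have h1 := hout b hbK
          have h2 := hband a haT.2
          linarith
        linarith
      · -- all of Si is above the band
        push_neg at hE
        have hlow : x i0 + ε ≤ (∑ a ∈ Si, x a) / Si.card := by
          have hc : (0:ℝ) < Si.card := by
            exact_mod_cast Finset.card_pos.mpr ⟨i, hiSi⟩
          rw [le_div_iff₀ hc]
          calc (x i0 + ε) * Si.card = ∑ _a ∈ Si, (x i0 + ε) := by
                rw [Finset.sum_const, nsmul_eq_mul]; ring
            _ ≤ ∑ a ∈ Si, x a := by
                apply Finset.sum_le_sum
                intro a ha
                exact le_of_lt (hout a (hE a ha))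
        calc hkAvg ε x i0 ≤ x i0 + ε := havg0_le
          _ ≤ (∑ a ∈ Si, x a) / Si.card := hlow
          _ = hkAvg ε x i := by rw [hkAvg]
  -- x' i0 is the infimum, so x' i0 - x i0 ≤ d₀
  have hninst : Nonempty (Fin n) := ⟨i0⟩
  have hx'0 : x' i0 - x i0 ≤ d₀ := by
    have h1 : x' i0 ≤ ⨅ i, x' i := by
      apply le_ciInf
      intro i
      rw [hupd i0, hupd i]
      exact hA i
    have : (⨅ i, x' i) - x i0 ≤ d₀ := hmin
    linarith
  -- Part 1
  have hsum0 : ∑ j ∈ Finset.univ.filter (fun j : Fin n => (j : ℕ) < K), (x j - x i0)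
      ≤ K * d₀ := by
    have h1 : x' i0 = (∑ j ∈ Finset.univ.filter (fun j : Fin n => (j:ℕ) < K), x j) / K := by
      rw [hupd i0, hkAvg, hcard0, hS0]
    have h2 : (∑ j ∈ Finset.univ.filter (fun j : Fin n => (j:ℕ) < K), x j) / K ≤ d₀ + x i0 := by
      have := hx'0; rw [h1] at this; linarith
    have h3 : ∑ j ∈ Finset.univ.filter (fun j : Fin n => (j:ℕ) < K), (x j - x i0)
        = (∑ j ∈ Finset.univ.filter (fun j : Fin n => (j:ℕ) < K), x j) - K * x i0 := by
      rw [Finset.sum_sub_distrib, Finset.sum_const, ← hS0, hcard0, nsmul_eq_mul]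
    rw [h3]
    rw [div_le_iff₀ hKposR] at h2
    nlinarith
  have part1 : ∀ i : Fin n, (i : ℕ) < K → x i - x i0 ≤ (K : ℝ) * d₀ := by
    intro i hiK
    have hmem : i ∈ Finset.univ.filter (fun j : Fin n => (j:ℕ) < K) := by simp [hiK]
    have h := Finset.single_le_sum (f := fun j => x j - x i0)
      (fun j hj => sub_nonneg.mpr (hx0le j)) hmem
    have h' : x i - x i0 ≤ ∑ j ∈ Finset.univ.filter (fun j : Fin n => (j:ℕ) < K), (x j - x i0) := h
    linarith
  refine ⟨part1, ?_⟩
  -- Part 2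
  -- crossing edge
  have hcross : ∃ u v : Fin n, (u : ℕ) < K ∧ K ≤ (v : ℕ) ∧ |x u - x v| ≤ ε := by
    have hgen : ∀ b : Fin n, Relation.ReflTransGen (fun u v => |x u - x v| ≤ ε) i0 b →
        (b : ℕ) < K ∨ ∃ u v : Fin n, (u : ℕ) < K ∧ K ≤ (v : ℕ) ∧ |x u - x v| ≤ ε := by
      intro b hb
      induction hb with
      | refl => left; omega
      | @tail b c hab hbc ih =>
        rcases ih with hbK | hcr
        · by_cases hcK : (c : ℕ) < K
          · left; exact hcK
          · right; exact ⟨b, c, hbK, le_of_not_gt hcK, hbc⟩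
        · right; exact hcr
    rcases hgen kK (hconn i0 kK) with h | h
    · exact absurd h (by omega)
    · exact h
  obtain ⟨u, v, huK, hvK, huv⟩ := hcross
  have hxKle : x kK ≤ x kk + ε := by
    have h1 : x kK ≤ x v := hsorted kK v (by rw [Fin.le_def]; omega)
    have h2 : x u ≤ x v := hsorted u v (by rw [Fin.le_def]; omega)
    have h3 : x v - x u ≤ ε := by
      have h := abs_le.mp huv
      linarith [h.1]
    have h4 : x u ≤ x kk := hsorted u kk (by rw [Fin.le_def]; omega)
    linarith
  have hkkK : (kk : ℕ) < K := by omega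
  have hkkband := hband kk hkkK
  have hkk0 := hx0le kk
  -- T = indices ≤ K, contained in neighborhood of kk
  set Skk := Finset.univ.filter fun j => |x j - x kk| ≤ ε with hSkk
  set T := Finset.univ.filter (fun j : Fin n => (j : ℕ) ≤ K) with hT
  have hTSkk : T ⊆ Skk := by
    intro j hj
    simp only [hT, Finset.mem_filter, Finset.mem_univ, true_and] at hj
    simp only [hSkk, Finset.mem_filter, Finset.mem_univ, true_and]
    by_cases hjK : (j : ℕ) < K
    · have h1 := hband j hjK
      have h2 := hx0le j
      rw [abs_le]; constructor <;> linarith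
    · have hjeq : j = kK := by
        apply Fin.ext; omega
      subst hjeq
      have h1 : x kk ≤ x kK := hsorted kk kK (by rw [Fin.le_def]; omega)
      rw [abs_le]; constructor <;> linarith
  have hTne : T.Nonempty := ⟨i0, Finset.mem_filter.mpr ⟨Finset.mem_univ _, by omega⟩⟩
  have hTcard : T.card = K + 1 := by
    have : T = Finset.Iic kK := by
      ext j
      simp only [hT, Finset.mem_filter, Finset.mem_univ, true_and, Finset.mem_Iic, Fin.le_def]
      exact Iff.rfl
    rw [this, Fin.card_Iic]
  -- avg over T ≤ x' kk
  have step : (∑ a ∈ T, x a) / T.card ≤ x' kk := by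
    rw [hupd kk, hkAvg]
    apply hk_avg_le_avg_of_high _ _ _ hTSkk hTne
    intro b hbS hbT a haT
    simp only [hT, Finset.mem_filter, Finset.mem_univ, true_and] at hbT haT
    exact hsorted a b (by rw [Fin.le_def]; omega)
  -- lower bound on avg over T
  have hKK : x i0 + ε < x kK := hout kK (by omega)
  have hsumT : (K + 1 : ℝ) * x i0 + ε < ∑ a ∈ T, x a := by
    have h1 : ∑ a ∈ T, (x a - x i0) = ∑ a ∈ T, x a - (K + 1 : ℝ) * x i0 := by
      rw [Finset.sum_sub_distrib, Finset.sum_const, hTcard, nsmul_eq_mul]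
      push_cast; ring
    have hmemK : kK ∈ T := Finset.mem_filter.mpr ⟨Finset.mem_univ _, by omega⟩
    have h2 := Finset.single_le_sum (f := fun j => x j - x i0)
      (fun j hj => sub_nonneg.mpr (hx0le j)) hmemK
    have h2' : x kK - x i0 ≤ ∑ a ∈ T, (x a - x i0) := h2
    have h3 : ε < x kK - x i0 := by linarith
    linarith
  have hK1pos : (0:ℝ) < (K:ℝ) + 1 := by positivity
  have havgT : x i0 + ε / ((K:ℝ) + 1) < (∑ a ∈ T, x a) / T.card := by
    have hcast : ((T.card : ℕ) : ℝ) = (K:ℝ) + 1 := by rw [hTcard]; push_cast; ring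
    rw [lt_div_iff₀ (by rw [hcast]; exact hK1pos), hcast]
    have hid : (x i0 + ε / ((K:ℝ)+1)) * ((K:ℝ)+1) = ((K:ℝ)+1) * x i0 + ε := by
      field_simp
    linarith [hsumT, hid]
  -- final arithmetic
  have hkkbound : x kk - x i0 ≤ (K:ℝ) * d₀ := part1 kk hkkK
  have hd₀n : (2 * (n:ℝ)^2 + 2*n + 1) * d₀ < ε := by
    have hpos : (0:ℝ) < 2 * (n:ℝ)^2 + 2*n + 1 := by positivity
    rw [lt_div_iff₀ hpos] at hd₀'
    linarith [hd₀', mul_comm d₀ (2 * (n:ℝ)^2 + 2*n + 1)]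
  have hKn' : (K:ℝ) + 1 ≤ (n:ℝ) := by exact_mod_cast hKn
  have harith : ((K:ℝ) + 1) * d₀ < ε / ((K:ℝ)+1) - (K:ℝ) * d₀ := by
    rw [lt_sub_iff_add_lt, ← sub_pos]
    have hKb : (0:ℝ) ≤ (K:ℝ) := Nat.cast_nonneg K
    have hnb : (0:ℝ) ≤ (n:ℝ) := Nat.cast_nonneg n
    have key : ((K:ℝ)+1) * (2*(K:ℝ)+1) ≤ 2*(n:ℝ)^2 + 2*n + 1 := by
      nlinarith [mul_nonneg (sub_nonneg.mpr hKn') hKb, mul_nonneg (sub_nonneg.mpr hKn') hnb,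
        sq_nonneg ((n:ℝ) - (K:ℝ) - 1)]
    have h1 : ((K:ℝ)+1) * (((K:ℝ)+1) * d₀ + (K:ℝ) * d₀) ≤ (2*(n:ℝ)^2 + 2*n + 1) * d₀ := by
      nlinarith [mul_le_mul_of_nonneg_right key hd₀.le]
    have h2 : (ε / ((K:ℝ)+1)) * ((K:ℝ)+1) = ε := by field_simp
    have h3 : ((K:ℝ)+1) * (((K:ℝ)+1) * d₀ + (K:ℝ) * d₀) < ε := lt_of_le_of_lt h1 hd₀n
    have : 0 < (ε / ((K:ℝ)+1) - (((K:ℝ)+1) * d₀ + (K:ℝ)*d₀)) * ((K:ℝ)+1) := by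
      rw [sub_mul, h2]; nlinarith
    nlinarith [this, hK1pos]
  have : x i0 + ε / ((K:ℝ)+1) < x' kk := lt_of_lt_of_le havgT step
  calc ((K:ℝ) + 1) * d₀ < ε / ((K:ℝ)+1) - (K:ℝ) * d₀ := harith
    _ ≤ ε / ((K:ℝ)+1) - (x kk - x i0) := by linarith
    _ < x' kk - x kk := by linarith
end
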